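/- arXiv:2403.03675 — 4 statements merged into one kernel-verified Lean document; each statement's English description precedes it below -/
import Mathlib

section
/- Let V, S ∈ ℂ^{n1×n2×n3}, G0 ∈ ℂ^{r1×r2×r3}, η > 0, α ∈ ℕ, and let U1 ∈ ℂ^{n1×r1}, U2 ∈ ℂ^{n2×r2}, U3 ∈ ℂ^{n3×r3} be semi-orthogonal. Set A = (η·[[V − S; U1ᴴ, U2ᴴ, U3ᴴ]] + G0)/(η + 1) ∈ ℂ^{r1×r2×r3}. Then any top-α hard thresholding Ĝ of A minimizes G ↦ (1/2)‖G − G0‖² + (η/2)‖V − S − [[G;U1,U2,U3]]‖² over the set {G ∈ ℂ^{r1×r2×r3} : ‖G‖₀ ≤ α}. -/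
open scoped BigOperators
open Matrix Classical

/-- Number of nonzero entries (the "ℓ₀ norm") of a complex array. -/
noncomputable def l0 {ι : Type*} [Fintype ι] (x : ι → ℂ) : ℕ :=
  (Finset.univ.filter fun i => x i ≠ 0).card

/-- `yhat` is a top-`α` hard thresholding of `a`. -/
def IsTopThresh {ι : Type*} [Fintype ι] (α : ℕ) (a yhat : ι → ℂ) : Prop :=
  ∃ I : Finset ι, I.card = min α (Fintype.card ι) ∧
    (∀ i ∈ I, ∀ j, j ∉ I → ‖a j‖ ≤ ‖a i‖) ∧
    (∀ i, yhat i = if i ∈ I then a i else 0)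

/-- The Tucker product `[[G; U1, U2, U3]]`. -/
noncomputable def tucker {r1 r2 r3 n1 n2 n3 : ℕ}
    (G : Fin r1 × Fin r2 × Fin r3 → ℂ)
    (U1 : Matrix (Fin n1) (Fin r1) ℂ) (U2 : Matrix (Fin n2) (Fin r2) ℂ)
    (U3 : Matrix (Fin n3) (Fin r3) ℂ) :
    Fin n1 × Fin n2 × Fin n3 → ℂ :=
  fun a => ∑ i : Fin r1 × Fin r2 × Fin r3,
    G i * U1 a.1 i.1 * U2 a.2.1 i.2.1 * U3 a.2.2 i.2.2

/-! ### Auxiliary lemmas -/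

lemma thresh_sum {ι : Type*} [Fintype ι] (w : ι → ℝ) (hw : ∀ i, 0 ≤ w i)
    (I J : Finset ι) (hIJ : J.card ≤ I.card)
    (hdom : ∀ i ∈ I, ∀ j ∉ I, w j ≤ w i) :
    ∑ j ∈ J, w j ≤ ∑ i ∈ I, w i := by
  have hcard : (J \ I).card ≤ (I \ J).card := by
    have h1 := Finset.card_sdiff_add_card_inter J I
    have h2 := Finset.card_sdiff_add_card_inter I J
    rw [Finset.inter_comm] at h1
    omega
  have key : ∑ j ∈ J \ I, w j ≤ ∑ i ∈ I \ J, w i := by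
    by_cases h : (I \ J).Nonempty
    · obtain ⟨i0, hi0, hmin⟩ := Finset.exists_min_image (I \ J) w h
      have hi0I : i0 ∈ I := (Finset.mem_sdiff.mp hi0).1
      calc ∑ j ∈ J \ I, w j ≤ (J \ I).card • w i0 := by
            apply Finset.sum_le_card_nsmul
            intro j hj
            exact hdom i0 hi0I j (Finset.mem_sdiff.mp hj).2
        _ ≤ (I \ J).card • w i0 := nsmul_le_nsmul_left (hw i0) hcard
        _ ≤ ∑ i ∈ I \ J, w i := Finset.card_nsmul_le_sum _ _ _ (fun i hi => hmin i hi)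
    · rw [Finset.not_nonempty_iff_eq_empty] at h
      have hJ : J \ I = ∅ := Finset.card_eq_zero.mp
        (Nat.le_zero.mp (by simpa [h] using hcard))
      simp [h, hJ]
  have eJ : ∑ j ∈ J, w j = ∑ j ∈ J \ I, w j + ∑ j ∈ J ∩ I, w j := by
    rw [← Finset.sum_union (Finset.disjoint_sdiff_inter _ _), Finset.sdiff_union_inter]
  have eI : ∑ i ∈ I, w i = ∑ i ∈ I \ J, w i + ∑ i ∈ I ∩ J, w i := by
    rw [← Finset.sum_union (Finset.disjoint_sdiff_inter _ _), Finset.sdiff_union_inter]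
  rw [eJ, eI, Finset.inter_comm J I]
  linarith

lemma per_index (η : ℝ) (g g0 a b : ℂ)
    (hab : ((η:ℂ)+1) * a = (η:ℂ)*b + g0) :
    (1/2) * Complex.normSq (g - g0) + (η/2) * Complex.normSq g
      - η * ((starRingEnd ℂ) b * g).re
    = ((η+1)/2) * Complex.normSq (g - a)
      + ((1/2) * Complex.normSq g0 - ((η+1)/2) * Complex.normSq a) := by
  have hre : (η+1) * a.re = η * b.re + g0.re := by
    have := congrArg Complex.re hab
    simpa [Complex.add_re, Complex.mul_re, Complex.ofReal_re, Complex.ofReal_im] using this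
  have him : (η+1) * a.im = η * b.im + g0.im := by
    have := congrArg Complex.im hab
    simpa [Complex.add_im, Complex.mul_im, Complex.ofReal_re, Complex.ofReal_im] using this
  simp only [Complex.normSq_apply, Complex.sub_re, Complex.sub_im, Complex.mul_re,
    Complex.mul_im, Complex.conj_re, Complex.conj_im]
  linear_combination g.re * hre + g.im * him

lemma sum_prod3 {n1 n2 n3 : ℕ} (f1 : Fin n1 → ℂ) (f2 : Fin n2 → ℂ) (f3 : Fin n3 → ℂ) :
    ∑ a : Fin n1 × Fin n2 × Fin n3, f1 a.1 * f2 a.2.1 * f3 a.2.2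
      = (∑ x, f1 x) * (∑ x, f2 x) * (∑ x, f3 x) := by
  symm
  rw [mul_assoc, Finset.sum_mul_sum, Finset.sum_mul_sum, Fintype.sum_prod_type]
  simp only [Finset.mul_sum, Fintype.sum_prod_type]
  apply Finset.sum_congr rfl; intro x1 _
  apply Finset.sum_congr rfl; intro x2 _
  apply Finset.sum_congr rfl; intro x3 _
  ring

lemma tucker_adjoint {r1 r2 r3 n1 n2 n3 : ℕ}
    (Y : Fin n1 × Fin n2 × Fin n3 → ℂ) (G : Fin r1 × Fin r2 × Fin r3 → ℂ)
    (U1 : Matrix (Fin n1) (Fin r1) ℂ) (U2 : Matrix (Fin n2) (Fin r2) ℂ)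
    (U3 : Matrix (Fin n3) (Fin r3) ℂ) :
    ∑ a, (starRingEnd ℂ) (Y a) * tucker G U1 U2 U3 a
      = ∑ i, (starRingEnd ℂ) (tucker Y U1ᴴ U2ᴴ U3ᴴ i) * G i := by
  unfold tucker
  simp only [map_sum, _root_.map_mul, Finset.sum_mul, Finset.mul_sum,
    Matrix.conjTranspose_apply, Complex.star_def, Complex.conj_conj]
  rw [Finset.sum_comm]
  apply Finset.sum_congr rfl
  intro i _
  apply Finset.sum_congr rfl
  intro a _
  ring

lemma tucker_inner {r1 r2 r3 n1 n2 n3 : ℕ}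
    (H G : Fin r1 × Fin r2 × Fin r3 → ℂ)
    (U1 : Matrix (Fin n1) (Fin r1) ℂ) (U2 : Matrix (Fin n2) (Fin r2) ℂ)
    (U3 : Matrix (Fin n3) (Fin r3) ℂ)
    (h1 : U1ᴴ * U1 = 1) (h2 : U2ᴴ * U2 = 1) (h3 : U3ᴴ * U3 = 1) :
    ∑ a, (starRingEnd ℂ) (tucker H U1 U2 U3 a) * tucker G U1 U2 U3 a
      = ∑ i, (starRingEnd ℂ) (H i) * G i := by
  unfold tucker
  simp only [map_sum, _root_.map_mul, Finset.sum_mul, Finset.mul_sum]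
  rw [Finset.sum_comm]
  apply Finset.sum_congr rfl
  intro y _
  rw [Finset.sum_comm]
  have inner : ∀ i : Fin r1 × Fin r2 × Fin r3,
      (∑ x : Fin n1 × Fin n2 × Fin n3,
        (starRingEnd ℂ) (H i) * (starRingEnd ℂ) (U1 x.1 i.1) * (starRingEnd ℂ) (U2 x.2.1 i.2.1)
          * (starRingEnd ℂ) (U3 x.2.2 i.2.2) * (G y * U1 x.1 y.1 * U2 x.2.1 y.2.1 * U3 x.2.2 y.2.2))
      = (starRingEnd ℂ) (H i) * G y *
          ((U1ᴴ * U1) i.1 y.1 * ((U2ᴴ * U2) i.2.1 y.2.1 * (U3ᴴ * U3) i.2.2 y.2.2)) := by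
    intro i
    have e : ∀ x : Fin n1 × Fin n2 × Fin n3,
        (starRingEnd ℂ) (H i) * (starRingEnd ℂ) (U1 x.1 i.1) * (starRingEnd ℂ) (U2 x.2.1 i.2.1)
          * (starRingEnd ℂ) (U3 x.2.2 i.2.2) * (G y * U1 x.1 y.1 * U2 x.2.1 y.2.1 * U3 x.2.2 y.2.2)
        = (starRingEnd ℂ) (H i) * G y *
            (((starRingEnd ℂ) (U1 x.1 i.1) * U1 x.1 y.1) * ((starRingEnd ℂ) (U2 x.2.1 i.2.1) * U2 x.2.1 y.2.1)
              * ((starRingEnd ℂ) (U3 x.2.2 i.2.2) * U3 x.2.2 y.2.2)) := by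
      intro x; ring
    rw [Finset.sum_congr rfl (fun x _ => e x), ← Finset.mul_sum,
      sum_prod3 (fun x => (starRingEnd ℂ) (U1 x i.1) * U1 x y.1)
        (fun x => (starRingEnd ℂ) (U2 x i.2.1) * U2 x y.2.1)
        (fun x => (starRingEnd ℂ) (U3 x i.2.2) * U3 x y.2.2)]
    have m1 : (∑ x, (starRingEnd ℂ) (U1 x i.1) * U1 x y.1) = (U1ᴴ * U1) i.1 y.1 := by
      simp [Matrix.mul_apply, Matrix.conjTranspose_apply, Complex.star_def]
    have m2 : (∑ x, (starRingEnd ℂ) (U2 x i.2.1) * U2 x y.2.1) = (U2ᴴ * U2) i.2.1 y.2.1 := by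
      simp [Matrix.mul_apply, Matrix.conjTranspose_apply, Complex.star_def]
    have m3 : (∑ x, (starRingEnd ℂ) (U3 x i.2.2) * U3 x y.2.2) = (U3ᴴ * U3) i.2.2 y.2.2 := by
      simp [Matrix.mul_apply, Matrix.conjTranspose_apply, Complex.star_def]
    rw [m1, m2, m3]; ring
  rw [Finset.sum_congr rfl (fun i _ => inner i), h1, h2, h3]
  simp [Matrix.one_apply, Fintype.sum_prod_type, mul_ite, ite_mul, mul_zero, zero_mul,
    Finset.sum_ite_eq, Finset.sum_ite_eq', Finset.mem_univ]

/-- Closed-form solution of the core-tensor subproblem of the APBCD algorithm: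
with `A = (η·[[V − S; U1ᴴ, U2ᴴ, U3ᴴ]] + G0)/(η + 1)`, any top-`α` hard thresholding `Ĝ` of `A`
minimizes `G ↦ (1/2)‖G − G0‖² + (η/2)‖V − S − [[G;U1,U2,U3]]‖²` over `{G : ‖G‖₀ ≤ α}`. -/
theorem core_subproblem_solution {r1 r2 r3 n1 n2 n3 : ℕ}
    (V S : Fin n1 × Fin n2 × Fin n3 → ℂ)
    (G0 : Fin r1 × Fin r2 × Fin r3 → ℂ)
    (η : ℝ) (hη : 0 < η) (α : ℕ)
    (U1 : Matrix (Fin n1) (Fin r1) ℂ) (U2 : Matrix (Fin n2) (Fin r2) ℂ)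
    (U3 : Matrix (Fin n3) (Fin r3) ℂ)
    (h1 : U1ᴴ * U1 = 1) (h2 : U2ᴴ * U2 = 1) (h3 : U3ᴴ * U3 = 1)
    (A : Fin r1 × Fin r2 × Fin r3 → ℂ)
    (hA : ∀ i, A i = ((η : ℂ) * tucker (fun a => V a - S a) U1ᴴ U2ᴴ U3ᴴ i + G0 i) / ((η : ℂ) + 1))
    (Ghat : Fin r1 × Fin r2 × Fin r3 → ℂ)
    (hGhat : IsTopThresh α A Ghat) :
    l0 Ghat ≤ α ∧
      ∀ G : Fin r1 × Fin r2 × Fin r3 → ℂ, l0 G ≤ α →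
        (1 / 2) * ∑ i, ‖Ghat i - G0 i‖ ^ 2
            + (η / 2) * ∑ a, ‖V a - S a - tucker Ghat U1 U2 U3 a‖ ^ 2
          ≤ (1 / 2) * ∑ i, ‖G i - G0 i‖ ^ 2
            + (η / 2) * ∑ a, ‖V a - S a - tucker G U1 U2 U3 a‖ ^ 2 := by
  obtain ⟨I, hIcard, hIdom, hIval⟩ := hGhat
  set Y : Fin n1 × Fin n2 × Fin n3 → ℂ := fun a => V a - S a with hY
  set B : Fin r1 × Fin r2 × Fin r3 → ℂ := tucker Y U1ᴴ U2ᴴ U3ᴴ with hB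
  have hne : (η : ℂ) + 1 ≠ 0 := by
    have : ((η + 1 : ℝ) : ℂ) ≠ 0 := Complex.ofReal_ne_zero.mpr (by linarith)
    simpa using this
  have hab : ∀ i, ((η:ℂ)+1) * A i = (η:ℂ) * B i + G0 i := by
    intro i
    rw [hA i]
    field_simp
  -- the key quadratic identity
  set C : ℝ := (∑ i, ((1/2) * Complex.normSq (G0 i) - ((η+1)/2) * Complex.normSq (A i)))
      + (η/2) * ∑ a, Complex.normSq (Y a) with hC
  have key : ∀ G : Fin r1 × Fin r2 × Fin r3 → ℂ,
      (1 / 2) * ∑ i, ‖G i - G0 i‖ ^ 2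
          + (η / 2) * ∑ a, ‖V a - S a - tucker G U1 U2 U3 a‖ ^ 2
        = ((η+1)/2) * ∑ i, Complex.normSq (G i - A i) + C := by
    intro G
    have hiso : ∑ a, Complex.normSq (tucker G U1 U2 U3 a) = ∑ i, Complex.normSq (G i) := by
      have h := tucker_inner G G U1 U2 U3 h1 h2 h3
      have l : ∀ z : ℂ, (starRingEnd ℂ) z * z = (Complex.normSq z : ℂ) := by
        intro z; rw [mul_comm, Complex.mul_conj]
      rw [Finset.sum_congr rfl (fun a _ => l _), Finset.sum_congr rfl (fun i _ => l _)] at h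
      rw [← Complex.ofReal_sum, ← Complex.ofReal_sum] at h
      exact_mod_cast h
    have hadj : ∑ a, ((V a - S a) * (starRingEnd ℂ) (tucker G U1 U2 U3 a)).re
        = ∑ i, ((starRingEnd ℂ) (B i) * G i).re := by
      have e1 : ∀ a, ((V a - S a) * (starRingEnd ℂ) (tucker G U1 U2 U3 a)).re
          = ((starRingEnd ℂ) (Y a) * tucker G U1 U2 U3 a).re := by
        intro a
        rw [← Complex.conj_re ((starRingEnd ℂ) (Y a) * tucker G U1 U2 U3 a),
          _root_.map_mul, Complex.conj_conj, hY]
      rw [Finset.sum_congr rfl (fun a _ => e1 a), ← Complex.re_sum,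
        tucker_adjoint Y G U1 U2 U3, Complex.re_sum, hB]
    have at1 : ∑ a, ‖V a - S a - tucker G U1 U2 U3 a‖ ^ 2
        = ∑ a, Complex.normSq (Y a) + ∑ i, Complex.normSq (G i)
          - 2 * ∑ i, ((starRingEnd ℂ) (B i) * G i).re := by
      have e2 : ∀ a, ‖V a - S a - tucker G U1 U2 U3 a‖ ^ 2
          = Complex.normSq (Y a) + Complex.normSq (tucker G U1 U2 U3 a)
            - 2 * ((V a - S a) * (starRingEnd ℂ) (tucker G U1 U2 U3 a)).re := by
        intro a
        rw [Complex.sq_norm, hY]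
        exact Complex.normSq_sub _ _
      rw [Finset.sum_congr rfl (fun a _ => e2 a), Finset.sum_sub_distrib,
        Finset.sum_add_distrib, ← Finset.mul_sum, hiso, hadj]
    have expand : ∑ i, ((1/2) * Complex.normSq (G i - G0 i) + (η/2) * Complex.normSq (G i)
          - η * ((starRingEnd ℂ) (B i) * G i).re)
        = ∑ i, (((η+1)/2) * Complex.normSq (G i - A i)
          + ((1/2) * Complex.normSq (G0 i) - ((η+1)/2) * Complex.normSq (A i))) :=
      Finset.sum_congr rfl (fun i _ => per_index η (G i) (G0 i) (A i) (B i) (hab i))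
    have lhs_e : ∑ i, ((1/2) * Complex.normSq (G i - G0 i) + (η/2) * Complex.normSq (G i)
          - η * ((starRingEnd ℂ) (B i) * G i).re)
        = (1/2) * ∑ i, Complex.normSq (G i - G0 i) + (η/2) * ∑ i, Complex.normSq (G i)
          - η * ∑ i, ((starRingEnd ℂ) (B i) * G i).re := by
      rw [Finset.sum_sub_distrib, Finset.sum_add_distrib, ← Finset.mul_sum, ← Finset.mul_sum,
        ← Finset.mul_sum]
    have rhs_e : ∑ i, (((η+1)/2) * Complex.normSq (G i - A i)
          + ((1/2) * Complex.normSq (G0 i) - ((η+1)/2) * Complex.normSq (A i)))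
        = ((η+1)/2) * ∑ i, Complex.normSq (G i - A i)
          + ∑ i, ((1/2) * Complex.normSq (G0 i) - ((η+1)/2) * Complex.normSq (A i)) := by
      rw [Finset.sum_add_distrib, ← Finset.mul_sum]
    have habs : ∀ i, ‖G i - G0 i‖ ^ 2 = Complex.normSq (G i - G0 i) :=
      fun i => Complex.sq_norm _
    rw [Finset.sum_congr rfl (fun i _ => habs i), at1, hC]
    rw [lhs_e, rhs_e] at expand
    linarith
  constructor
  · have hsub : Finset.univ.filter (fun i => Ghat i ≠ 0) ⊆ I := by
      intro i hi
      rw [Finset.mem_filter] at hi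
      by_contra hnotI
      exact hi.2 (by rw [hIval i, if_neg hnotI])
    calc l0 Ghat ≤ I.card := Finset.card_le_card hsub
      _ = min α (Fintype.card (Fin r1 × Fin r2 × Fin r3)) := hIcard
      _ ≤ α := min_le_left _ _
  · intro G hG
    rw [key Ghat, key G]
    have hmono : ∑ i, Complex.normSq (Ghat i - A i) ≤ ∑ i, Complex.normSq (G i - A i) := by
      set J : Finset (Fin r1 × Fin r2 × Fin r3) := Finset.univ.filter (fun i => G i ≠ 0) with hJdef
      -- value of  Ghat sum
      have hGhatsum : ∑ i, Complex.normSq (Ghat i - A i) = ∑ i ∈ Iᶜ, Complex.normSq (A i) := by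
        rw [← Finset.sum_add_sum_compl I]
        have z1 : ∑ i ∈ I, Complex.normSq (Ghat i - A i) = 0 := by
          apply Finset.sum_eq_zero
          intro i hi
          rw [hIval i, if_pos hi, sub_self, Complex.normSq_zero]
        have z2 : ∀ i ∈ Iᶜ, Complex.normSq (Ghat i - A i) = Complex.normSq (A i) := by
          intro i hi
          rw [hIval i, if_neg (Finset.mem_compl.mp hi), zero_sub, Complex.normSq_neg]
        rw [z1, Finset.sum_congr rfl z2, zero_add]
      have hGlb : ∑ i ∈ Jᶜ, Complex.normSq (A i) ≤ ∑ i, Complex.normSq (G i - A i) := by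
        have : ∑ i ∈ Jᶜ, Complex.normSq (A i) = ∑ i ∈ Jᶜ, Complex.normSq (G i - A i) := by
          apply Finset.sum_congr rfl
          intro i hi
          have : G i = 0 := by
            have := Finset.mem_compl.mp hi
            simpa [hJdef] using this
          rw [this, zero_sub, Complex.normSq_neg]
        rw [this]
        apply Finset.sum_le_sum_of_subset_of_nonneg (Finset.subset_univ _)
        intro i _ _
        exact Complex.normSq_nonneg _
      have hcardJ : J.card ≤ I.card := by
        rw [hIcard]
        apply le_min
        · exact hG
        · exact Finset.card_le_univ J
      have hdom : ∀ i ∈ I, ∀ j ∉ I, Complex.normSq (A j) ≤ Complex.normSq (A i) := by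
        intro i hi j hj
        rw [← Complex.sq_norm, ← Complex.sq_norm]
        exact pow_le_pow_left₀ (norm_nonneg _) (hIdom i hi j hj) 2
      have hts : ∑ j ∈ J, Complex.normSq (A j) ≤ ∑ i ∈ I, Complex.normSq (A i) :=
        thresh_sum (fun i => Complex.normSq (A i)) (fun i => Complex.normSq_nonneg _) I J hcardJ hdom
      have cI := Finset.sum_add_sum_compl I (fun i => Complex.normSq (A i))
      have cJ := Finset.sum_add_sum_compl J (fun i => Complex.normSq (A i))
      have : ∑ i ∈ Iᶜ, Complex.normSq (A i) ≤ ∑ i ∈ Jᶜ, Complex.normSq (A i) := by linarith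
      linarith [hGhatsum, hGlb, this]
    have hpos : (0:ℝ) ≤ (η+1)/2 := by linarith
    have := mul_le_mul_of_nonneg_left hmono hpos
    linarith
end

section
/- Let N ≥ 1, a, b ∈ ℂᴺ, η > 0 and α ∈ ℕ. Set B = (η·b + a)/(η + 1). Then any top-α hard thresholding Ŝ of B minimizes S ↦ (1/2)‖S − a‖² + (η/2)‖b − S‖² over the set {S ∈ ℂᴺ : ‖S‖₀ ≤ α}. -/
open scoped BigOperators
open Classical

/-- Completing the square: per-coordinate identity for the objective. -/
lemma apbcd_key (η : ℝ) (hη : 0 < η) (a b s B : ℂ)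
    (hB : B = ((η:ℂ)*b+a)/((η:ℂ)+1)) :
    (1/2)*‖s-a‖^2 + (η/2)*‖b-s‖^2
      = ((η+1)/2)*‖s-B‖^2 + (η/(2*(η+1)))*‖a-b‖^2 := by
  have hne : (η:ℝ) + 1 ≠ 0 := by positivity
  subst hB
  simp only [Complex.sq_norm, Complex.normSq_apply, Complex.sub_re, Complex.sub_im,
    Complex.div_re, Complex.div_im, Complex.add_re, Complex.add_im, Complex.mul_re,
    Complex.mul_im, Complex.ofReal_re, Complex.ofReal_im, Complex.one_re, Complex.one_im]
  field_simp
  ring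

/-- A set of top values dominates the sum over any set of no larger cardinality. -/
lemma apbcd_topsum {ι : Type*} (w : ι → ℝ) (hw : ∀ i, 0 ≤ w i) (I T : Finset ι)
    (hcard : T.card ≤ I.card) (htop : ∀ i ∈ I, ∀ j ∉ I, w j ≤ w i) :
    ∑ j ∈ T, w j ≤ ∑ j ∈ I, w j := by
  classical
  have hc : (T \ I).card ≤ (I \ T).card := by
    have h1 := Finset.card_sdiff_add_card_inter T I
    have h2 := Finset.card_sdiff_add_card_inter I T
    have h3 : (T ∩ I).card = (I ∩ T).card := by rw [Finset.inter_comm]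
    omega
  have hkey : ∑ j ∈ T \ I, w j ≤ ∑ j ∈ I \ T, w j := by
    rcases (T \ I).eq_empty_or_nonempty with h | h
    · rw [h]; simp; exact Finset.sum_nonneg fun j _ => hw j
    · have hne : (I \ T).Nonempty := by
        rw [← Finset.card_pos] at h ⊢; omega
      obtain ⟨i₀, hi₀, hmin⟩ := Finset.exists_min_image (I \ T) w hne
      calc ∑ j ∈ T \ I, w j ≤ ∑ _j ∈ T \ I, w i₀ := by
            apply Finset.sum_le_sum
            intro j hj
            exact htop i₀ (Finset.mem_sdiff.mp hi₀).1 j (Finset.mem_sdiff.mp hj).2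
        _ = (T \ I).card * w i₀ := by rw [Finset.sum_const, nsmul_eq_mul]
        _ ≤ (I \ T).card * w i₀ := by
            apply mul_le_mul_of_nonneg_right _ (hw i₀)
            exact_mod_cast hc
        _ ≤ ∑ j ∈ I \ T, w j := by
            rw [← nsmul_eq_mul, ← Finset.sum_const]
            exact Finset.sum_le_sum fun j hj => hmin j hj
  calc ∑ j ∈ T, w j = ∑ j ∈ T ∩ I, w j + ∑ j ∈ T \ I, w j :=
        (Finset.sum_inter_add_sum_sdiff T I w).symm
    _ ≤ ∑ j ∈ T ∩ I, w j + ∑ j ∈ I \ T, w j := by linarith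
    _ = ∑ j ∈ I ∩ T, w j + ∑ j ∈ I \ T, w j := by rw [Finset.inter_comm]
    _ = ∑ j ∈ I, w j := Finset.sum_inter_add_sum_sdiff I T w

/-- Closed-form solution of the sparse-tensor subproblem of the APBCD algorithm:
with `B = (η·b + a)/(η + 1)`, any top-`α` hard thresholding `Ŝ` of `B` minimizes
`S ↦ (1/2)‖S − a‖² + (η/2)‖b − S‖²` over `{S : ‖S‖₀ ≤ α}`. -/
theorem sparse_subproblem_solution {N : ℕ} (hN : 1 ≤ N)
    (a b : Fin N → ℂ) (η : ℝ) (hη : 0 < η) (α : ℕ)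
    (B : Fin N → ℂ) (hB : ∀ i, B i = ((η : ℂ) * b i + a i) / ((η : ℂ) + 1))
    (Shat : Fin N → ℂ) (hShat : IsTopThresh α B Shat) :
    l0 Shat ≤ α ∧
      ∀ S : Fin N → ℂ, l0 S ≤ α →
        (1 / 2) * ∑ i, ‖Shat i - a i‖ ^ 2
            + (η / 2) * ∑ i, ‖b i - Shat i‖ ^ 2
          ≤ (1 / 2) * ∑ i, ‖S i - a i‖ ^ 2
            + (η / 2) * ∑ i, ‖b i - S i‖ ^ 2 := by
  obtain ⟨I, hIcard, hItop, hIdef⟩ := hShat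
  have hIcard' : I.card = min α N := by simpa using hIcard
  -- weights
  set w : Fin N → ℝ := fun i => ‖B i‖ ^ 2 with hw
  have hwpos : ∀ i, 0 ≤ w i := fun i => by positivity
  constructor
  · -- l0 bound
    have hsub : (Finset.univ.filter fun i => Shat i ≠ 0) ⊆ I := by
      intro i hi
      rw [Finset.mem_filter] at hi
      by_contra hiI
      exact hi.2 (by rw [hIdef i, if_neg hiI])
    calc l0 Shat ≤ I.card := Finset.card_le_card hsub
      _ = min α N := hIcard'
      _ ≤ α := min_le_left _ _
  · intro S hS
    -- completing the square for both sides
    have transform : ∀ X : Fin N → ℂ,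
        (1/2) * ∑ i, ‖X i - a i‖ ^ 2
          + (η/2) * ∑ i, ‖b i - X i‖ ^ 2
        = (η+1)/2 * ∑ i, ‖X i - B i‖ ^ 2
          + (η/(2*(η+1))) * ∑ i, ‖a i - b i‖ ^ 2 := by
      intro X
      rw [Finset.mul_sum, Finset.mul_sum, Finset.mul_sum, Finset.mul_sum,
        ← Finset.sum_add_distrib, ← Finset.sum_add_distrib]
      exact Finset.sum_congr rfl fun i _ =>
        apbcd_key η hη (a i) (b i) (X i) (B i) (hB i)
    rw [transform Shat, transform S]
    have hηpos : (0:ℝ) < (η+1)/2 := by positivity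
    have hmain : ∑ i, ‖Shat i - B i‖ ^ 2
        ≤ ∑ i, ‖S i - B i‖ ^ 2 := by
      set T : Finset (Fin N) := Finset.univ.filter fun i => S i ≠ 0 with hT
      have hTcard : T.card ≤ I.card := by
        have h1 : T.card ≤ α := hS
        have h2 : T.card ≤ N := by
          calc T.card ≤ (Finset.univ : Finset (Fin N)).card := Finset.card_le_card (Finset.filter_subset _ _)
            _ = N := by simp
        omega
      -- LHS equals sum of w outside I
      have hL : ∑ i, ‖Shat i - B i‖ ^ 2
          = ∑ i ∈ Finset.univ \ I, w i := by
        rw [← Finset.sum_sdiff (Finset.subset_univ I)]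
        have h1 : ∑ i ∈ I, ‖Shat i - B i‖ ^ 2 = 0 := by
          apply Finset.sum_eq_zero
          intro i hi
          rw [hIdef i, if_pos hi]
          simp
        have h2 : ∑ i ∈ Finset.univ \ I, ‖Shat i - B i‖ ^ 2
            = ∑ i ∈ Finset.univ \ I, w i := by
          apply Finset.sum_congr rfl
          intro i hi
          rw [hIdef i, if_neg (Finset.mem_sdiff.mp hi).2]
          simp [hw]
        rw [h1, h2, add_zero]
      -- RHS is at least sum of w outside T
      have hR : ∑ i ∈ Finset.univ \ T, w i ≤ ∑ i, ‖S i - B i‖ ^ 2 := by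
        calc ∑ i ∈ Finset.univ \ T, w i
            = ∑ i ∈ Finset.univ \ T, ‖S i - B i‖ ^ 2 := by
              apply Finset.sum_congr rfl
              intro i hi
              have : S i = 0 := by
                have := (Finset.mem_sdiff.mp hi).2
                simp [hT] at this
                exact this
              simp [this, hw]
          _ ≤ ∑ i, ‖S i - B i‖ ^ 2 := by
              apply Finset.sum_le_sum_of_subset_of_nonneg (Finset.subset_univ _)
              intro i _ _; positivity
      -- compare the two complements via the top property
      have hsums : ∑ i ∈ Finset.univ \ I, w i ≤ ∑ i ∈ Finset.univ \ T, w i := by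
        have e1 : ∑ i ∈ Finset.univ \ I, w i = ∑ i, w i - ∑ i ∈ I, w i :=
          Finset.sum_sdiff_eq_sub (Finset.subset_univ I)
        have e2 : ∑ i ∈ Finset.univ \ T, w i = ∑ i, w i - ∑ i ∈ T, w i :=
          Finset.sum_sdiff_eq_sub (Finset.subset_univ T)
        have := apbcd_topsum w hwpos I T hTcard (by
          intro i hi j hj
          have h := hItop i hi j hj
          simp only [hw]
          exact pow_le_pow_left₀ (norm_nonneg _) h 2)
        rw [e1, e2]
        linarith
      linarith [hL ▸ (le_trans hsums hR)]
    have hsame : (0:ℝ) ≤ (η/(2*(η+1))) * ∑ i, ‖a i - b i‖ ^ 2 := by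
      positivity
    nlinarith [hmain, hηpos]
end

section
/- Let β > 0 and let Gᵏ, Sᵏ (tensors) and Uᵢᵏ, Ūᵢᵏ (matrices, i = 1,2,3) be sequences in finite-dimensional complex normed spaces satisfying Ūᵢᵏ⁺¹ = Uᵢᵏ⁺¹ + β(Uᵢᵏ⁺¹ − Ūᵢᵏ) for all k. Let hᵏ be a nonincreasing real sequence with limit H*, and suppose: (a) there is ρ1 > 0 with ρ1·[ Σ_{i=1}^{3}(‖Uᵢᵏ − Ūᵢᵏ‖² + ‖Uᵢᵏ⁺¹ − Ūᵢᵏ⁺¹‖²) + ‖Sᵏ⁺¹ − Sᵏ‖² + ‖Gᵏ⁺¹ − Gᵏ‖² ] ≤ hᵏ − hᵏ⁺¹ for all k; (b) there are ρ2 > 0, an integer l ≥ 0, η̄ ∈ (0,∞] and a function φ : [0,η̄) → [0,∞) that is continuous, concave, continuously differentiable on (0,η̄) with φ′ > 0 and φ(0) = 0, such that for all k > l one has hᵏ − H* < η̄ and, whenever hᵏ > H*, φ′(hᵏ − H*)·ρ2·( ‖Gᵏ − Gᵏ⁻¹‖ + ‖Sᵏ − Sᵏ⁻¹‖ + Σ_{i=1}^{3}‖Ūᵢᵏ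 − Uᵢᵏ‖ ) ≥ 1. Then Σ_{k=0}^{∞} ( ‖Gᵏ⁺¹ − Gᵏ‖ + ‖Sᵏ⁺¹ − Sᵏ‖ + Σ_{i=1}^{3}‖Uᵢᵏ⁺¹ − Uᵢᵏ‖ ) < ∞; in particular the sequence Xᵏ = (Gᵏ, U1ᵏ, U2ᵏ, U3ᵏ, Sᵏ) is a Cauchy sequence and converges. -/
open scoped BigOperators ENNReal
open Filter Topology

private lemma five_sq (A1 A2 A3 A4 A5 : ℝ) :
    (A1 + A2 + A3 + A4 + A5)^2 ≤ 5 * (A1^2 + A2^2 + A3^2 + A4^2 + A5^2) := by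
  nlinarith [sq_nonneg (A1 - A2), sq_nonneg (A1 - A3), sq_nonneg (A1 - A4), sq_nonneg (A1 - A5),
    sq_nonneg (A2 - A3), sq_nonneg (A2 - A4), sq_nonneg (A2 - A5),
    sq_nonneg (A3 - A4), sq_nonneg (A3 - A5), sq_nonneg (A4 - A5)]

private lemma amgm_half {X A B : ℝ} (hX : 0 ≤ X) (hA : 0 ≤ A) (hB : 0 ≤ B)
    (h : X^2 ≤ A * B) : X ≤ (A + B) / 2 := by
  have h2 : (2*X)^2 ≤ (A+B)^2 := by nlinarith [sq_nonneg (A - B)]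
  have h3 : 2*X ≤ A + B := le_of_pow_le_pow_left₀ (by norm_num) (by linarith) h2
  linarith

private lemma chain_lemma {r1 r2 fy cm cnew Q S5 D yx : ℝ}
    (hr1 : 0 < r1) (hr2 : 0 < r2) (hfy : 0 < fy) (hcm : 0 ≤ cm) (hcnew : 0 ≤ cnew)
    (hS5 : 0 ≤ S5) (hCS : cnew^2 ≤ 5 * S5) (hQ5 : S5 ≤ Q) (hQ : r1 * Q ≤ yx)
    (hD : fy * yx ≤ D) (hKLi : 1 ≤ fy * (r2 * cm)) :
    cnew ≤ cm / 2 + 5 * r2 / r1 * D := by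
  have hQ0 : 0 ≤ Q := le_trans hS5 hQ5
  have hyx0 : 0 ≤ yx := le_trans (mul_nonneg hr1.le hQ0) hQ
  have hD0 : 0 ≤ D := le_trans (mul_nonneg hfy.le hyx0) hD
  have t1 : r1 * S5 ≤ yx := le_trans (mul_le_mul_of_nonneg_left hQ5 hr1.le) hQ
  have t2 : fy * (r1 * S5) ≤ D := le_trans (mul_le_mul_of_nonneg_left t1 hfy.le) hD
  have t3 : r1 * S5 ≤ r2 * cm * D := by
    calc r1 * S5 ≤ (fy * (r2 * cm)) * (r1 * S5) :=
          le_mul_of_one_le_left (mul_nonneg hr1.le (by nlinarith)) hKLi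
      _ = (r2 * cm) * (fy * (r1 * S5)) := by ring
      _ ≤ (r2 * cm) * D := mul_le_mul_of_nonneg_left t2 (mul_nonneg hr2.le hcm)
      _ = r2 * cm * D := by ring
  have t4 : cnew^2 ≤ cm * (5 * r2 / r1 * D) := by
    have e : cm * (5 * r2 / r1 * D) * r1 = 5 * (r2 * cm * D) := by
      field_simp
    have h5 : cnew^2 * r1 ≤ cm * (5 * r2 / r1 * D) * r1 := by
      rw [e]
      nlinarith [mul_le_mul_of_nonneg_right hCS hr1.le, t3]
    exact le_of_mul_le_mul_right h5 hr1
  have hKD0 : 0 ≤ 5 * r2 / r1 * D := by positivity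
  have := amgm_half hcnew hcm hKD0 t4
  linarith

private lemma step_bound {E : Type*} [NormedAddCommGroup E] [NormedSpace ℂ E]
    {β : ℝ} (hβ : 0 < β) (U Ub : ℕ → E)
    (hext : ∀ k, Ub (k+1) = U (k+1) + β • (U (k+1) - Ub k)) (k : ℕ) :
    ‖U (k+1+1) - U (k+1)‖ ≤ β⁻¹ * ‖Ub (k+1+1) - U (k+1+1)‖ + ‖Ub (k+1) - U (k+1)‖ := by
  have h1 : Ub (k+1+1) - U (k+1+1) = β • (U (k+1+1) - Ub (k+1)) := by
    rw [hext (k+1), add_sub_cancel_left]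
  have h2 : ‖U (k+1+1) - Ub (k+1)‖ = β⁻¹ * ‖Ub (k+1+1) - U (k+1+1)‖ := by
    rw [h1, norm_smul, Real.norm_of_nonneg hβ.le, inv_mul_cancel_left₀ hβ.ne']
  calc ‖U (k+1+1) - U (k+1)‖
      = ‖(U (k+1+1) - Ub (k+1)) + (Ub (k+1) - U (k+1))‖ := by rw [sub_add_sub_cancel]
    _ ≤ ‖U (k+1+1) - Ub (k+1)‖ + ‖Ub (k+1) - U (k+1)‖ := norm_add_le _ _
    _ = β⁻¹ * ‖Ub (k+1+1) - U (k+1+1)‖ + ‖Ub (k+1) - U (k+1)‖ := by rw [h2]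


set_option maxHeartbeats 1000000 in
/-- Theorem 1 (finite length and convergence): assume the inertial extrapolation relation,
the sufficient-decrease inequality (Lemma 1) for a nonincreasing sequence `hᵏ → H*`, and the
Kurdyka–Łojasiewicz inequality along the iterates (combining Lemma 2 with a desingularizing
function `φ` on `[0, η̄)`, `η̄ ∈ (0,∞]`). Then the successive differences of the iterates are
summable; in particular `Xᵏ = (Gᵏ, U1ᵏ, U2ᵏ, U3ᵏ, Sᵏ)` is a Cauchy sequence and converges. -/
theorem apbcd_finite_length_and_convergence
    {EG ES E1 E2 E3 : Type*}
    [NormedAddCommGroup EG] [NormedSpace ℂ EG] [FiniteDimensional ℂ EG]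
    [NormedAddCommGroup ES] [NormedSpace ℂ ES] [FiniteDimensional ℂ ES]
    [NormedAddCommGroup E1] [NormedSpace ℂ E1] [FiniteDimensional ℂ E1]
    [NormedAddCommGroup E2] [NormedSpace ℂ E2] [FiniteDimensional ℂ E2]
    [NormedAddCommGroup E3] [NormedSpace ℂ E3] [FiniteDimensional ℂ E3]
    (β : ℝ) (hβ : 0 < β)
    (G : ℕ → EG) (S : ℕ → ES)
    (U1 Ub1 : ℕ → E1) (U2 Ub2 : ℕ → E2) (U3 Ub3 : ℕ → E3)
    (hext1 : ∀ k, Ub1 (k+1) = U1 (k+1) + β • (U1 (k+1) - Ub1 k))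
    (hext2 : ∀ k, Ub2 (k+1) = U2 (k+1) + β • (U2 (k+1) - Ub2 k))
    (hext3 : ∀ k, Ub3 (k+1) = U3 (k+1) + β • (U3 (k+1) - Ub3 k))
    (h : ℕ → ℝ) (Hstar : ℝ) (hmono : Antitone h) (hlim : Tendsto h atTop (𝓝 Hstar))
    -- (a) sufficient decrease
    (ρ1 : ℝ) (hρ1 : 0 < ρ1)
    (hdec : ∀ k,
      ρ1 * ((‖U1 k - Ub1 k‖^2 + ‖U1 (k+1) - Ub1 (k+1)‖^2)
          + (‖U2 k - Ub2 k‖^2 + ‖U2 (k+1) - Ub2 (k+1)‖^2)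
          + (‖U3 k - Ub3 k‖^2 + ‖U3 (k+1) - Ub3 (k+1)‖^2)
          + ‖S (k+1) - S k‖^2 + ‖G (k+1) - G k‖^2)
        ≤ h k - h (k+1))
    -- (b) the KL inequality along the iterates, via a desingularizing function φ on [0, η̄)
    (ρ2 : ℝ) (hρ2 : 0 < ρ2) (l : ℕ) (ηbar : ℝ≥0∞) (hηbar : 0 < ηbar)
    (φ φ' : ℝ → ℝ)
    (hφ0 : φ 0 = 0)
    (hφcont : ContinuousOn φ {t : ℝ | 0 ≤ t ∧ ENNReal.ofReal t < ηbar})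
    (hφconc : ConcaveOn ℝ {t : ℝ | 0 ≤ t ∧ ENNReal.ofReal t < ηbar} φ)
    (hφderiv : ∀ t : ℝ, 0 < t → ENNReal.ofReal t < ηbar → HasDerivAt φ (φ' t) t)
    (hφ'cont : ContinuousOn φ' {t : ℝ | 0 < t ∧ ENNReal.ofReal t < ηbar})
    (hφ'pos : ∀ t : ℝ, 0 < t → ENNReal.ofReal t < ηbar → 0 < φ' t)
    (hsmall : ∀ k, l < k → ENNReal.ofReal (h k - Hstar) < ηbar)
    (hKL : ∀ k, l < k → Hstar < h k →
      1 ≤ φ' (h k - Hstar) * (ρ2 * (‖G k - G (k-1)‖ + ‖S k - S (k-1)‖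
        + ‖Ub1 k - U1 k‖ + ‖Ub2 k - U2 k‖ + ‖Ub3 k - U3 k‖))) :
    Summable (fun k => ‖G (k+1) - G k‖ + ‖S (k+1) - S k‖
        + ‖U1 (k+1) - U1 k‖ + ‖U2 (k+1) - U2 k‖ + ‖U3 (k+1) - U3 k‖) ∧
    CauchySeq (fun k => (G k, U1 k, U2 k, U3 k, S k)) ∧
    ∃ X : EG × E1 × E2 × E3 × ES,
      Tendsto (fun k => (G k, U1 k, U2 k, U3 k, S k)) atTop (𝓝 X) := by
  
  classical
  have hge : ∀ k, Hstar ≤ h k := fun k =>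
    le_of_tendsto hlim (eventually_atTop.2 ⟨k, fun m hm => hmono hm⟩)
  set s : Set ℝ := {t : ℝ | 0 ≤ t ∧ ENNReal.ofReal t < ηbar} with hs
  set c : ℕ → ℝ := fun j => ‖G (j+1) - G j‖ + ‖S (j+1) - S j‖
      + ‖Ub1 (j+1) - U1 (j+1)‖ + ‖Ub2 (j+1) - U2 (j+1)‖ + ‖Ub3 (j+1) - U3 (j+1)‖ with hcdef
  have hc0 : ∀ j, 0 ≤ c j := fun j => by
    simp only [hcdef]; positivity
  set Δ : ℕ → ℝ := fun k => φ (h k - Hstar) with hΔdef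
  have hmem : ∀ k, l < k → (h k - Hstar) ∈ s := fun k hk => ⟨sub_nonneg.2 (hge k), hsmall k hk⟩
  have h0s : (0:ℝ) ∈ s := ⟨le_refl 0, by simpa using hηbar⟩
  have hconc : ∀ x y : ℝ, x ∈ s → y ∈ s → x < y → φ' y * (y - x) ≤ φ y - φ x := by
    intro x y hx hy hxy
    have hy0 : 0 < y := lt_of_le_of_lt hx.1 hxy
    have hd := hφderiv y hy0 hy.2
    have hsl := hφconc.le_slope_of_hasDerivAt hx hy hxy hd
    rw [slope_def_field] at hsl
    have hpos : (0:ℝ) < y - x := sub_pos.2 hxy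
    calc φ' y * (y - x) ≤ ((φ y - φ x) / (y - x)) * (y - x) :=
          mul_le_mul_of_nonneg_right hsl hpos.le
      _ = φ y - φ x := div_mul_cancel₀ _ hpos.ne'
  have hΔ0 : ∀ k, l < k → 0 ≤ Δ k := by
    intro k hk
    rcases eq_or_lt_of_le (hge k) with heq | hlt
    · have hzero : h k - Hstar = 0 := by rw [← heq]; ring
      simp only [hΔdef, hzero, hφ0, le_refl]
    · have hy0 : (0:ℝ) < h k - Hstar := sub_pos.2 hlt
      have hcc := hconc 0 _ h0s (hmem k hk) hy0
      simp only [hφ0, sub_zero] at hcc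
      have hp := hφ'pos _ hy0 (hmem k hk).2
      simp only [hΔdef]
      have hpy := mul_pos hp hy0
      linarith
  set K : ℝ := 5 * ρ2 / ρ1 with hK
  have hKpos : 0 < K := by rw [hK]; positivity
  -- per-step recurrence
  have hrec : ∀ m, l ≤ m → c (m+1) ≤ c m / 2 + K * (Δ (m+1) - Δ (m+1+1)) := by
    intro m hm
    have hk : l < m + 1 := Nat.lt_succ_of_le hm
    have hdk := hdec (m+1)
    have hf1 : ‖Ub1 (m+1+1) - U1 (m+1+1)‖ = ‖U1 (m+1+1) - Ub1 (m+1+1)‖ := norm_sub_rev _ _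
    have hf2 : ‖Ub2 (m+1+1) - U2 (m+1+1)‖ = ‖U2 (m+1+1) - Ub2 (m+1+1)‖ := norm_sub_rev _ _
    have hf3 : ‖Ub3 (m+1+1) - U3 (m+1+1)‖ = ‖U3 (m+1+1) - Ub3 (m+1+1)‖ := norm_sub_rev _ _
    have hc1 : c (m+1) = ‖G (m+1+1) - G (m+1)‖ + ‖S (m+1+1) - S (m+1)‖
        + ‖U1 (m+1+1) - Ub1 (m+1+1)‖ + ‖U2 (m+1+1) - Ub2 (m+1+1)‖
        + ‖U3 (m+1+1) - Ub3 (m+1+1)‖ := by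
      simp only [hcdef]; rw [hf1, hf2, hf3]
    have hcm : c m = ‖G (m+1) - G m‖ + ‖S (m+1) - S m‖
        + ‖Ub1 (m+1) - U1 (m+1)‖ + ‖Ub2 (m+1) - U2 (m+1)‖ + ‖Ub3 (m+1) - U3 (m+1)‖ := by
      simp only [hcdef]
    have hCS : (c (m+1))^2 ≤ 5 * (‖G (m+1+1) - G (m+1)‖^2 + ‖S (m+1+1) - S (m+1)‖^2
        + ‖U1 (m+1+1) - Ub1 (m+1+1)‖^2 + ‖U2 (m+1+1) - Ub2 (m+1+1)‖^2
        + ‖U3 (m+1+1) - Ub3 (m+1+1)‖^2) := by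
      rw [hc1]; exact five_sq _ _ _ _ _
    have hQ5 : (‖G (m+1+1) - G (m+1)‖^2 + ‖S (m+1+1) - S (m+1)‖^2
        + ‖U1 (m+1+1) - Ub1 (m+1+1)‖^2 + ‖U2 (m+1+1) - Ub2 (m+1+1)‖^2
        + ‖U3 (m+1+1) - Ub3 (m+1+1)‖^2)
        ≤ ((‖U1 (m+1) - Ub1 (m+1)‖^2 + ‖U1 (m+1+1) - Ub1 (m+1+1)‖^2)
          + (‖U2 (m+1) - Ub2 (m+1)‖^2 + ‖U2 (m+1+1) - Ub2 (m+1+1)‖^2)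
          + (‖U3 (m+1) - Ub3 (m+1)‖^2 + ‖U3 (m+1+1) - Ub3 (m+1+1)‖^2)
          + ‖S (m+1+1) - S (m+1)‖^2 + ‖G (m+1+1) - G (m+1)‖^2) := by
      linarith [sq_nonneg ‖U1 (m+1) - Ub1 (m+1)‖, sq_nonneg ‖U2 (m+1) - Ub2 (m+1)‖,
        sq_nonneg ‖U3 (m+1) - Ub3 (m+1)‖]
    have hS50 : (0:ℝ) ≤ ‖G (m+1+1) - G (m+1)‖^2 + ‖S (m+1+1) - S (m+1)‖^2
        + ‖U1 (m+1+1) - Ub1 (m+1+1)‖^2 + ‖U2 (m+1+1) - Ub2 (m+1+1)‖^2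
        + ‖U3 (m+1+1) - Ub3 (m+1+1)‖^2 := by positivity
    by_cases hcase : h (m+1+1) = h (m+1)
    · -- stationary case: everything vanishes
      have hΔe : Δ (m+1) - Δ (m+1+1) = 0 := by
        simp only [hΔdef, hcase, sub_self]
      have hQle : ρ1 * ((‖U1 (m+1) - Ub1 (m+1)‖^2 + ‖U1 (m+1+1) - Ub1 (m+1+1)‖^2)
          + (‖U2 (m+1) - Ub2 (m+1)‖^2 + ‖U2 (m+1+1) - Ub2 (m+1+1)‖^2)
          + (‖U3 (m+1) - Ub3 (m+1)‖^2 + ‖U3 (m+1+1) - Ub3 (m+1+1)‖^2)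
          + ‖S (m+1+1) - S (m+1)‖^2 + ‖G (m+1+1) - G (m+1)‖^2) ≤ 0 := by
        rw [hcase] at hdk; linarith
      have hQnp : ((‖U1 (m+1) - Ub1 (m+1)‖^2 + ‖U1 (m+1+1) - Ub1 (m+1+1)‖^2)
          + (‖U2 (m+1) - Ub2 (m+1)‖^2 + ‖U2 (m+1+1) - Ub2 (m+1+1)‖^2)
          + (‖U3 (m+1) - Ub3 (m+1)‖^2 + ‖U3 (m+1+1) - Ub3 (m+1+1)‖^2)
          + ‖S (m+1+1) - S (m+1)‖^2 + ‖G (m+1+1) - G (m+1)‖^2) ≤ 0 := by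
        have h00 : ρ1 * ((‖U1 (m+1) - Ub1 (m+1)‖^2 + ‖U1 (m+1+1) - Ub1 (m+1+1)‖^2)
          + (‖U2 (m+1) - Ub2 (m+1)‖^2 + ‖U2 (m+1+1) - Ub2 (m+1+1)‖^2)
          + (‖U3 (m+1) - Ub3 (m+1)‖^2 + ‖U3 (m+1+1) - Ub3 (m+1+1)‖^2)
          + ‖S (m+1+1) - S (m+1)‖^2 + ‖G (m+1+1) - G (m+1)‖^2) ≤ ρ1 * 0 := by
          rw [mul_zero]; exact hQle
        exact le_of_mul_le_mul_left h00 hρ1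
      have hsq0 : (c (m+1))^2 ≤ 0 := by linarith [hCS, hQ5, hQnp]
      have hceq : c (m+1) = 0 := by
        have h2 : (c (m+1))^2 = 0 := le_antisymm hsq0 (sq_nonneg _)
        exact pow_eq_zero_iff (two_ne_zero) |>.1 h2
      have hle0 : c (m+1) ≤ 0 := le_of_eq hceq
      rw [hΔe]
      have := hc0 m
      linarith
    · -- genuine decrease: KL step
      have hlt : Hstar < h (m+1) :=
        lt_of_le_of_lt (hge (m+1+1)) (lt_of_le_of_ne (hmono (Nat.le_succ (m+1))) hcase)
      have hy0 : 0 < h (m+1) - Hstar := sub_pos.2 hlt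
      have hys : (h (m+1) - Hstar) ∈ s := hmem _ hk
      have hxs : (h (m+1+1) - Hstar) ∈ s := hmem _ (by omega)
      have hxy : h (m+1+1) - Hstar < h (m+1) - Hstar := by
        have h1 : h (m+1+1) ≤ h (m+1) := hmono (Nat.le_succ (m+1))
        have h2 : h (m+1+1) ≠ h (m+1) := hcase
        have := lt_of_le_of_ne h1 h2
        linarith
      have hD := hconc _ _ hxs hys hxy
      have hφ'y := hφ'pos _ hy0 hys.2
      have hKLi : 1 ≤ φ' (h (m+1) - Hstar) * (ρ2 * c m) := by
        have hkl := hKL (m+1) hk hlt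
        simp only [Nat.add_sub_cancel] at hkl
        rw [hcm]; exact hkl
      have hQ' : ρ1 * ((‖U1 (m+1) - Ub1 (m+1)‖^2 + ‖U1 (m+1+1) - Ub1 (m+1+1)‖^2)
          + (‖U2 (m+1) - Ub2 (m+1)‖^2 + ‖U2 (m+1+1) - Ub2 (m+1+1)‖^2)
          + (‖U3 (m+1) - Ub3 (m+1)‖^2 + ‖U3 (m+1+1) - Ub3 (m+1+1)‖^2)
          + ‖S (m+1+1) - S (m+1)‖^2 + ‖G (m+1+1) - G (m+1)‖^2)
          ≤ (h (m+1) - Hstar) - (h (m+1+1) - Hstar) := by linarith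
      have hD' : φ' (h (m+1) - Hstar) * ((h (m+1) - Hstar) - (h (m+1+1) - Hstar))
          ≤ φ (h (m+1) - Hstar) - φ (h (m+1+1) - Hstar) := hD
      have hfinal := chain_lemma hρ1 hρ2 hφ'y (hc0 m) (hc0 (m+1)) hS50 hCS hQ5 hQ' hD' hKLi
      have hΔe : Δ (m+1) - Δ (m+1+1) = φ (h (m+1) - Hstar) - φ (h (m+1+1) - Hstar) := by
        simp only [hΔdef]
      rw [hΔe, hK]
      linarith
  -- telescoping: bounded partial sums
  have hP : ∀ n, ∑ i ∈ Finset.range n, c (i + (l+1))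
      ≤ (∑ i ∈ Finset.range n, c (i + l)) / 2 + K * (Δ (l+1) - Δ (n + (l+1))) := by
    intro n
    induction n with
    | zero => simp
    | succ n ih =>
        rw [Finset.sum_range_succ, Finset.sum_range_succ]
        have hr := hrec (n + l) (Nat.le_add_left l n)
        have e1 : n + l + 1 = n + (l+1) := by omega
        rw [e1] at hr
        have e2 : n + (l+1) + 1 = (n+1) + (l+1) := by omega
        rw [e2] at hr
        linarith
  have hsum_bound : ∀ n, ∑ i ∈ Finset.range n, c (i + (l+1)) ≤ c l + 2 * K * Δ (l+1) := by
    intro n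
    have hP' := hP n
    have hΔn : 0 ≤ Δ (n + (l+1)) := hΔ0 _ (by omega)
    have hsub : ∑ i ∈ Finset.range n, c (i + l)
        ≤ c l + ∑ i ∈ Finset.range n, c (i + (l+1)) := by
      cases n with
      | zero => simpa using hc0 l
      | succ m =>
          rw [Finset.sum_range_succ' (fun i => c (i + l)) m]
          have e3 : ∑ i ∈ Finset.range m, c (i + 1 + l)
              = ∑ i ∈ Finset.range m, c (i + (l+1)) :=
            Finset.sum_congr rfl (fun i _ => by rw [show i + 1 + l = i + (l+1) from by omega])
          rw [e3, Nat.zero_add]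
          have hss := Finset.sum_range_succ (fun i => c (i + (l+1))) m
          have := hc0 (m + (l+1))
          linarith
    linarith [mul_nonneg hKpos.le hΔn]
  have hq : Summable (fun i => c (i + (l+1))) :=
    summable_of_sum_range_le (fun i => hc0 _) hsum_bound
  have hcsum : Summable c := (summable_nat_add_iff (l+1)).1 hq
  -- summability of the actual step lengths
  set a : ℕ → ℝ := fun k => ‖G (k+1) - G k‖ + ‖S (k+1) - S k‖
      + ‖U1 (k+1) - U1 k‖ + ‖U2 (k+1) - U2 k‖ + ‖U3 (k+1) - U3 k‖ with hadef
  have ha_le : ∀ k, a (k+1) ≤ c k + c (k+1) + β⁻¹ * c (k+1) := by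
    intro k
    have b1 := step_bound hβ U1 Ub1 hext1 k
    have b2 := step_bound hβ U2 Ub2 hext2 k
    have b3 := step_bound hβ U3 Ub3 hext3 k
    have hw : β⁻¹ * (‖Ub1 (k+1+1) - U1 (k+1+1)‖ + ‖Ub2 (k+1+1) - U2 (k+1+1)‖
          + ‖Ub3 (k+1+1) - U3 (k+1+1)‖)
        ≤ β⁻¹ * (‖G (k+1+1) - G (k+1)‖ + ‖S (k+1+1) - S (k+1)‖
          + ‖Ub1 (k+1+1) - U1 (k+1+1)‖ + ‖Ub2 (k+1+1) - U2 (k+1+1)‖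
          + ‖Ub3 (k+1+1) - U3 (k+1+1)‖) := by
      apply mul_le_mul_of_nonneg_left _ (inv_nonneg.2 hβ.le)
      have := norm_nonneg (G (k+1+1) - G (k+1))
      have := norm_nonneg (S (k+1+1) - S (k+1))
      linarith
    simp only [hadef, hcdef]
    have n1 := norm_nonneg (G (k+1) - G k)
    have n2 := norm_nonneg (S (k+1) - S k)
    have n3 := norm_nonneg (Ub1 (k+1) - U1 (k+1))
    have n4 := norm_nonneg (Ub2 (k+1) - U2 (k+1))
    have n5 := norm_nonneg (Ub3 (k+1) - U3 (k+1))
    have n6 := norm_nonneg (Ub1 (k+1+1) - U1 (k+1+1))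
    have n7 := norm_nonneg (Ub2 (k+1+1) - U2 (k+1+1))
    have n8 := norm_nonneg (Ub3 (k+1+1) - U3 (k+1+1))
    linarith [b1, b2, b3, hw]
  have hcsum1 : Summable (fun k => c (k+1)) := (summable_nat_add_iff 1).2 hcsum
  have haux : Summable (fun k => c k + c (k+1) + β⁻¹ * c (k+1)) :=
    (hcsum.add hcsum1).add (hcsum1.mul_left _)
  have ha0 : ∀ k, 0 ≤ a k := fun k => by simp only [hadef]; positivity
  have ha1 : Summable (fun k => a (k+1)) :=
    Summable.of_nonneg_of_le (fun k => ha0 (k+1)) ha_le haux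
  have hasum : Summable a := (summable_nat_add_iff 1).1 ha1
  -- Cauchy sequences componentwise
  have hGle : ∀ n, dist (G n) (G (n+1)) ≤ a n := by
    intro n
    rw [dist_eq_norm, norm_sub_rev]
    simp only [hadef]
    linarith [norm_nonneg (S (n+1) - S n), norm_nonneg (U1 (n+1) - U1 n),
      norm_nonneg (U2 (n+1) - U2 n), norm_nonneg (U3 (n+1) - U3 n)]
  have hSle : ∀ n, dist (S n) (S (n+1)) ≤ a n := by
    intro n
    rw [dist_eq_norm, norm_sub_rev]
    simp only [hadef]
    linarith [norm_nonneg (G (n+1) - G n), norm_nonneg (U1 (n+1) - U1 n),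
      norm_nonneg (U2 (n+1) - U2 n), norm_nonneg (U3 (n+1) - U3 n)]
  have hU1le : ∀ n, dist (U1 n) (U1 (n+1)) ≤ a n := by
    intro n
    rw [dist_eq_norm, norm_sub_rev]
    simp only [hadef]
    linarith [norm_nonneg (G (n+1) - G n), norm_nonneg (S (n+1) - S n),
      norm_nonneg (U2 (n+1) - U2 n), norm_nonneg (U3 (n+1) - U3 n)]
  have hU2le : ∀ n, dist (U2 n) (U2 (n+1)) ≤ a n := by
    intro n
    rw [dist_eq_norm, norm_sub_rev]
    simp only [hadef]
    linarith [norm_nonneg (G (n+1) - G n), norm_nonneg (S (n+1) - S n),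
      norm_nonneg (U1 (n+1) - U1 n), norm_nonneg (U3 (n+1) - U3 n)]
  have hU3le : ∀ n, dist (U3 n) (U3 (n+1)) ≤ a n := by
    intro n
    rw [dist_eq_norm, norm_sub_rev]
    simp only [hadef]
    linarith [norm_nonneg (G (n+1) - G n), norm_nonneg (S (n+1) - S n),
      norm_nonneg (U1 (n+1) - U1 n), norm_nonneg (U2 (n+1) - U2 n)]
  have hCG : CauchySeq G :=
    cauchySeq_of_summable_dist (Summable.of_nonneg_of_le (fun n => dist_nonneg) hGle hasum)
  have hCS' : CauchySeq S :=
    cauchySeq_of_summable_dist (Summable.of_nonneg_of_le (fun n => dist_nonneg) hSle hasum)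
  have hCU1 : CauchySeq U1 :=
    cauchySeq_of_summable_dist (Summable.of_nonneg_of_le (fun n => dist_nonneg) hU1le hasum)
  have hCU2 : CauchySeq U2 :=
    cauchySeq_of_summable_dist (Summable.of_nonneg_of_le (fun n => dist_nonneg) hU2le hasum)
  have hCU3 : CauchySeq U3 :=
    cauchySeq_of_summable_dist (Summable.of_nonneg_of_le (fun n => dist_nonneg) hU3le hasum)
  have hC : CauchySeq (fun k => (G k, U1 k, U2 k, U3 k, S k)) :=
    hCG.prodMk (hCU1.prodMk (hCU2.prodMk (hCU3.prodMk hCS')))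
  exact ⟨hasum, hC, cauchySeq_tendsto_of_complete hC⟩
end

section
/- Let n ≥ r ≥ 1 and let U ∈ ℂ^{n×r} satisfy UᴴU = I_r. Then there exist a matrix Q ∈ ℂ^{n×n} that is a product of at most (2n − r − 1)r/2 complex Givens rotation matrices G(i,j,η,θ) with 1 ≤ i < j ≤ n, and unimodular complex numbers d₁, …, d_r, such that U = Q·Ī·D, where Ī ∈ ℂ^{n×r} is the rectangular identity (Ī_{kk} = 1 for 1 ≤ k ≤ r and all other entries 0) and D = diag(d₁, …, d_r). In particular, U is determined by (2n − r − 1)r real rotation parameters together with r phases. -/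
open Matrix

/-- The complex Givens rotation matrix `G(i,j,η,θ) ∈ ℂ^{n×n}`: it agrees with the identity
except for the entries `G_{ii} = cos η`, `G_{ij} = e^{iθ} sin η`, `G_{ji} = −e^{−iθ} sin η`,
`G_{jj} = cos η`. -/
noncomputable def givensMatrix {n : ℕ} (i j : Fin n) (η θ : ℝ) :
    Matrix (Fin n) (Fin n) ℂ :=
  Matrix.of fun a b =>
    if a = i ∧ b = i then (Real.cos η : ℂ)
    else if a = i ∧ b = j then Complex.exp ((θ : ℂ) * Complex.I) * (Real.sin η : ℂ)
    else if a = j ∧ b = i then -(Complex.exp (-(θ : ℂ) * Complex.I) * (Real.sin η : ℂ))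
    else if a = j ∧ b = j then (Real.cos η : ℂ)
    else if a = b then 1 else 0

/-- The rectangular identity `Ī ∈ ℂ^{n×r}`: `Ī_{kk} = 1` for `1 ≤ k ≤ r`, all other entries `0`. -/
def rectId (n r : ℕ) : Matrix (Fin n) (Fin r) ℂ :=
  Matrix.of fun a b => if (a : ℕ) = (b : ℕ) then 1 else 0

variable {n m : ℕ}

local notation "conj'" => (starRingEnd ℂ)

lemma givensMatrix_row_i {i j : Fin n} (hij : i ≠ j) (η θ : ℝ) (c : Fin n) :
    givensMatrix i j η θ i c =
      (if c = i then (Real.cos η : ℂ) else 0)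
        + (if c = j then Complex.exp ((θ : ℂ) * Complex.I) * (Real.sin η : ℂ) else 0) := by
  unfold givensMatrix; simp only [Matrix.of_apply]
  split_ifs <;> first | (exfalso; tauto) | simp_all

lemma givensMatrix_row_j {i j : Fin n} (hij : i ≠ j) (η θ : ℝ) (c : Fin n) :
    givensMatrix i j η θ j c =
      (if c = i then -(Complex.exp (-(θ : ℂ) * Complex.I) * (Real.sin η : ℂ)) else 0)
        + (if c = j then (Real.cos η : ℂ) else 0) := by
  unfold givensMatrix; simp only [Matrix.of_apply]
  split_ifs <;> first | (exfalso; tauto) | simp_all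

lemma givensMatrix_row_o {i j a : Fin n} (hai : a ≠ i) (haj : a ≠ j) (η θ : ℝ) (c : Fin n) :
    givensMatrix i j η θ a c = if c = a then 1 else 0 := by
  unfold givensMatrix; simp only [Matrix.of_apply]
  split_ifs <;> first | rfl | (exfalso; tauto) | simp_all

lemma sum_pair_conj_pair {i j : Fin n} (hij : i ≠ j) (p₁ q₁ p₂ q₂ : ℂ) :
    ∑ c, ((if c = i then p₁ else 0) + (if c = j then q₁ else 0)) *
      conj' ((if c = i then p₂ else 0) + (if c = j then q₂ else 0))
      = p₁ * conj' p₂ + q₁ * conj' q₂ := by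
  have h : ∀ c : Fin n, ((if c = i then p₁ else 0) + (if c = j then q₁ else 0)) *
      conj' ((if c = i then p₂ else 0) + (if c = j then q₂ else 0))
      = (if c = i then p₁ * conj' p₂ else 0) + (if c = j then q₁ * conj' q₂ else 0) := by
    intro c; split_ifs <;> simp_all
  rw [Finset.sum_congr rfl fun c _ => h c]
  simp [Finset.sum_add_distrib, Finset.sum_ite_eq']

lemma sum_pair_conj_single {i j b : Fin n} (hbi : b ≠ i) (hbj : b ≠ j) (p q : ℂ) :
    ∑ c, ((if c = i then p else 0) + (if c = j then q else 0)) *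
      conj' (if c = b then (1:ℂ) else 0) = 0 := by
  have h : ∀ c : Fin n, ((if c = i then p else 0) + (if c = j then q else 0)) *
      conj' (if c = b then (1:ℂ) else 0) = 0 := by
    intro c; split_ifs <;> simp_all
  rw [Finset.sum_congr rfl fun c _ => h c]; simp

lemma sum_single_conj_pair {i j a : Fin n} (hai : a ≠ i) (haj : a ≠ j) (p q : ℂ) :
    ∑ c, (if c = a then (1:ℂ) else 0) *
      conj' ((if c = i then p else 0) + (if c = j then q else 0)) = 0 := by
  have h : ∀ c : Fin n, (if c = a then (1:ℂ) else 0) *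
      conj' ((if c = i then p else 0) + (if c = j then q else 0)) = 0 := by
    intro c; split_ifs <;> simp_all
  rw [Finset.sum_congr rfl fun c _ => h c]; simp

lemma sum_single_conj_single (a b : Fin n) :
    ∑ c, (if c = a then (1:ℂ) else 0) * conj' (if c = b then (1:ℂ) else 0)
      = if a = b then 1 else 0 := by
  have h : ∀ c : Fin n, (if c = a then (1:ℂ) else 0) * conj' (if c = b then (1:ℂ) else 0)
      = if c = a then (if a = b then (1:ℂ) else 0) else 0 := by
    intro c; split_ifs <;> simp_all
  rw [Finset.sum_congr rfl fun c _ => h c]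
  simp [Finset.sum_ite_eq']

lemma exp_mul_exp_neg (θ : ℝ) :
    Complex.exp ((θ:ℂ) * Complex.I) * Complex.exp (-(θ:ℂ) * Complex.I) = 1 := by
  rw [← Complex.exp_add]; ring_nf; exact Complex.exp_zero

lemma conj_exp_I (θ : ℝ) : conj' (Complex.exp ((θ:ℂ) * Complex.I)) = Complex.exp (-(θ:ℂ) * Complex.I) := by
  rw [← Complex.exp_conj]; congr 1; simp

lemma conj_exp_neg_I (θ : ℝ) : conj' (Complex.exp (-(θ:ℂ) * Complex.I)) = Complex.exp ((θ:ℂ) * Complex.I) := by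
  rw [← Complex.exp_conj]; congr 1; simp

lemma cos_sq_add_sin_sq_C (η : ℝ) :
    (Real.cos η : ℂ) * (Real.cos η : ℂ) + (Real.sin η : ℂ) * (Real.sin η : ℂ) = 1 := by
  norm_cast
  rw [← Real.cos_sq_add_sin_sq η]; ring

lemma givens_mul_conjT {i j : Fin n} (hij : i ≠ j) (η θ : ℝ) :
    givensMatrix i j η θ * (givensMatrix i j η θ)ᴴ = 1 := by
  ext a b
  rw [Matrix.mul_apply, Matrix.one_apply]
  simp only [Matrix.conjTranspose_apply, ← starRingEnd_apply]
  rcases eq_or_ne i a with rfl | hai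
  · rcases eq_or_ne i b with rfl | hbi
    · rw [Finset.sum_congr rfl fun c _ => by rw [givensMatrix_row_i hij η θ c],
        sum_pair_conj_pair hij, if_pos rfl, Complex.conj_ofReal, _root_.map_mul, conj_exp_I,
        Complex.conj_ofReal]
      calc (Real.cos η:ℂ) * (Real.cos η:ℂ) +
            Complex.exp ((θ:ℂ)*Complex.I) * (Real.sin η:ℂ) *
              (Complex.exp (-(θ:ℂ)*Complex.I) * (Real.sin η:ℂ))
          = (Real.cos η:ℂ) * (Real.cos η:ℂ) +
            (Complex.exp ((θ:ℂ)*Complex.I) * Complex.exp (-(θ:ℂ)*Complex.I)) *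
              ((Real.sin η:ℂ) * (Real.sin η:ℂ)) := by ring
        _ = 1 := by rw [exp_mul_exp_neg, one_mul, cos_sq_add_sin_sq_C]
    · rcases eq_or_ne j b with rfl | hbj
      · rw [Finset.sum_congr rfl fun c _ => by
            rw [givensMatrix_row_i hij η θ c, givensMatrix_row_j hij η θ c],
          sum_pair_conj_pair hij, if_neg hij]
        rw [map_neg, _root_.map_mul, conj_exp_neg_I, Complex.conj_ofReal, Complex.conj_ofReal]
        ring
      · rw [Finset.sum_congr rfl fun c _ => by
            rw [givensMatrix_row_i hij η θ c,
              givensMatrix_row_o (Ne.symm hbi) (Ne.symm hbj) η θ c],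
          sum_pair_conj_single (Ne.symm hbi) (Ne.symm hbj), if_neg hbi]
  · rcases eq_or_ne j a with rfl | haj
    · rcases eq_or_ne i b with rfl | hbi
      · rw [Finset.sum_congr rfl fun c _ => by
            rw [givensMatrix_row_j hij η θ c, givensMatrix_row_i hij η θ c],
          sum_pair_conj_pair hij, if_neg (Ne.symm hij)]
        rw [_root_.map_mul, conj_exp_I, Complex.conj_ofReal, Complex.conj_ofReal]
        ring
      · rcases eq_or_ne j b with rfl | hbj
        · rw [Finset.sum_congr rfl fun c _ => by rw [givensMatrix_row_j hij η θ c],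
            sum_pair_conj_pair hij, if_pos rfl]
          rw [map_neg, _root_.map_mul, conj_exp_neg_I, Complex.conj_ofReal, Complex.conj_ofReal]
          calc -(Complex.exp (-(θ:ℂ)*Complex.I) * (Real.sin η:ℂ)) *
                -(Complex.exp ((θ:ℂ)*Complex.I) * (Real.sin η:ℂ)) +
                (Real.cos η:ℂ) * (Real.cos η:ℂ)
              = (Complex.exp ((θ:ℂ)*Complex.I) * Complex.exp (-(θ:ℂ)*Complex.I)) *
                  ((Real.sin η:ℂ) * (Real.sin η:ℂ)) +
                (Real.cos η:ℂ) * (Real.cos η:ℂ) := by ring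
            _ = 1 := by rw [exp_mul_exp_neg, one_mul, add_comm, cos_sq_add_sin_sq_C]
        · rw [Finset.sum_congr rfl fun c _ => by
              rw [givensMatrix_row_j hij η θ c,
                givensMatrix_row_o (Ne.symm hbi) (Ne.symm hbj) η θ c],
            sum_pair_conj_single (Ne.symm hbi) (Ne.symm hbj), if_neg hbj]
    · rcases eq_or_ne i b with rfl | hbi
      · rw [Finset.sum_congr rfl fun c _ => by
            rw [givensMatrix_row_o (Ne.symm hai) (Ne.symm haj) η θ c,
              givensMatrix_row_i hij η θ c],
          sum_single_conj_pair (Ne.symm hai) (Ne.symm haj), if_neg (Ne.symm hai)]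
      · rcases eq_or_ne j b with rfl | hbj
        · rw [Finset.sum_congr rfl fun c _ => by
              rw [givensMatrix_row_o (Ne.symm hai) (Ne.symm haj) η θ c,
                givensMatrix_row_j hij η θ c],
            sum_single_conj_pair (Ne.symm hai) (Ne.symm haj), if_neg (Ne.symm haj)]
        · rw [Finset.sum_congr rfl fun c _ => by
              rw [givensMatrix_row_o (Ne.symm hai) (Ne.symm haj) η θ c,
                givensMatrix_row_o (Ne.symm hbi) (Ne.symm hbj) η θ c],
            sum_single_conj_single]

lemma sum_pairc_mul {i j : Fin n} (hij : i ≠ j) (f : Fin n → ℂ) (p q : ℂ) :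
    ∑ c, ((if c = i then p else 0) + (if c = j then q else 0)) * f c = p * f i + q * f j := by
  have h : ∀ c : Fin n, ((if c = i then p else 0) + (if c = j then q else 0)) * f c
      = (if c = i then p * f c else 0) + (if c = j then q * f c else 0) := by
    intro c; split_ifs <;> simp_all
  rw [Finset.sum_congr rfl fun c _ => h c]
  rw [Finset.sum_add_distrib]
  simp [Finset.sum_ite_eq']

lemma sum_single_mul (a : Fin n) (f : Fin n → ℂ) :
    ∑ c, (if c = a then (1:ℂ) else 0) * f c = f a := by
  simp [ite_mul, Finset.sum_ite_eq']

/-- Entries of `Gᴴ · W`. -/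
lemma conjT_givens_mul_apply {i j : Fin n} (hij : i ≠ j) (η θ : ℝ)
    (W : Matrix (Fin n) (Fin m) ℂ) (a : Fin n) (k : Fin m) :
    ((givensMatrix i j η θ)ᴴ * W) a k =
      if a = i then (Real.cos η : ℂ) * W i k
          - Complex.exp ((θ:ℂ) * Complex.I) * (Real.sin η : ℂ) * W j k
      else if a = j then Complex.exp (-(θ:ℂ) * Complex.I) * (Real.sin η : ℂ) * W i k
          + (Real.cos η : ℂ) * W j k
      else W a k := by
  rw [Matrix.mul_apply]
  simp only [Matrix.conjTranspose_apply, ← starRingEnd_apply]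
  rcases eq_or_ne i a with rfl | hai
  · rw [if_pos rfl]
    have hcol : ∀ c : Fin n, conj' (givensMatrix i j η θ c i)
        = (if c = i then (Real.cos η:ℂ) else 0)
          + (if c = j then -(Complex.exp ((θ:ℂ)*Complex.I) * (Real.sin η:ℂ)) else 0) := by
      intro c; unfold givensMatrix; simp only [Matrix.of_apply]
      split_ifs <;>
        first
          | (exfalso; tauto)
          | simp_all [Complex.conj_ofReal, ← Complex.exp_conj, Complex.conj_I, mul_neg, neg_mul, neg_neg, ← Complex.ofReal_cos, ← Complex.ofReal_sin]
    rw [Finset.sum_congr rfl fun c _ => by rw [hcol c], sum_pairc_mul hij]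
    ring
  · rcases eq_or_ne j a with rfl | haj
    · rw [if_neg (Ne.symm hai), if_pos rfl]
      have hcol : ∀ c : Fin n, conj' (givensMatrix i j η θ c j)
          = (if c = i then Complex.exp (-(θ:ℂ)*Complex.I) * (Real.sin η:ℂ) else 0)
            + (if c = j then (Real.cos η:ℂ) else 0) := by
        intro c; unfold givensMatrix; simp only [Matrix.of_apply]
        split_ifs <;>
          first
            | (exfalso; tauto)
            | simp_all [Complex.conj_ofReal, ← Complex.exp_conj, Complex.conj_I, mul_neg, neg_mul, neg_neg, ← Complex.ofReal_cos, ← Complex.ofReal_sin]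
      rw [Finset.sum_congr rfl fun c _ => by rw [hcol c], sum_pairc_mul hij]
    · rw [if_neg (Ne.symm hai), if_neg (Ne.symm haj)]
      have hcol : ∀ c : Fin n, conj' (givensMatrix i j η θ c a)
          = if c = a then (1:ℂ) else 0 := by
        intro c; unfold givensMatrix; simp only [Matrix.of_apply]
        split_ifs <;>
          first
            | (exfalso; tauto)
            | simp_all [Complex.conj_ofReal, ← Complex.exp_conj, Complex.conj_I, mul_neg, neg_mul, neg_neg, ← Complex.ofReal_cos, ← Complex.ofReal_sin]
      rw [Finset.sum_congr rfl fun c _ => by rw [hcol c], sum_single_mul]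

lemma exists_theta (z : ℂ) (hz : ‖z‖ = 1) :
    ∃ θ : ℝ, θ ∈ Set.Ico 0 (2*Real.pi) ∧ Complex.exp (-(θ:ℂ)*Complex.I) = z := by
  have habs := Complex.norm_mul_exp_arg_mul_I z
  rw [hz, Complex.ofReal_one, one_mul] at habs
  have hpi := Real.pi_pos
  have h1 := Complex.neg_pi_lt_arg z
  have h2 := Complex.arg_le_pi z
  rcases le_or_gt (Complex.arg z) 0 with h | h
  · refine ⟨-z.arg, ⟨by linarith, by linarith⟩, ?_⟩
    rw [show -(((-z.arg : ℝ)):ℂ)*Complex.I = (z.arg:ℂ)*Complex.I by push_cast; ring, habs]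
  · refine ⟨2*Real.pi - z.arg, ⟨by linarith, by linarith⟩, ?_⟩
    rw [show -(((2*Real.pi - z.arg : ℝ)):ℂ)*Complex.I
        = (z.arg:ℂ)*Complex.I + -(2*(Real.pi:ℂ)*Complex.I) by push_cast; ring,
      Complex.exp_add, habs, Complex.exp_neg]
    norm_num [Complex.exp_two_pi_mul_I]

lemma exists_rotation_param (a b : ℂ) :
    ∃ η θ : ℝ, η ∈ Set.Icc 0 Real.pi ∧ θ ∈ Set.Ico 0 (2*Real.pi) ∧
      Complex.exp (-(θ:ℂ)*Complex.I) * (Real.sin η : ℂ) * a + (Real.cos η : ℂ) * b = 0 := by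
  have hpi := Real.pi_pos
  by_cases hb : b = 0
  · exact ⟨0, 0, ⟨le_refl 0, le_of_lt hpi⟩, ⟨le_refl 0, by linarith⟩, by simp [hb]⟩
  by_cases ha : a = 0
  · refine ⟨Real.pi/2, 0, ⟨by linarith, by linarith⟩, ⟨le_refl 0, by linarith⟩, ?_⟩
    simp [ha, Real.cos_pi_div_two]
  -- both nonzero
  set A := ‖a‖ with hAdef
  set B := ‖b‖ with hBdef
  have hA : 0 < A := norm_pos_iff.mpr ha
  have hB : 0 < B := norm_pos_iff.mpr hb
  set R := Real.sqrt (A^2 + B^2) with hRdef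
  have hR : 0 < R := Real.sqrt_pos.mpr (by nlinarith)
  have hRsq : R^2 = A^2 + B^2 := Real.sq_sqrt (by nlinarith)
  have hAR : A ≤ R := by
    nlinarith [sq_nonneg B, hR.le, hA.le]
  set x : ℝ := -(A/R) with hxdef
  have hx1 : -1 ≤ x := by
    rw [hxdef, neg_le, neg_neg]
    rw [div_le_one hR]; exact hAR
  have hx2 : x ≤ 1 := by
    rw [hxdef]
    have : 0 ≤ A/R := by positivity
    linarith
  set η := Real.arccos x with hetadef
  have hcos : Real.cos η = x := Real.cos_arccos hx1 hx2
  have hsin : Real.sin η = B/R := by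
    rw [hetadef, Real.sin_arccos, hxdef]
    have : 1 - (-(A/R))^2 = (B/R)^2 := by
      field_simp
      nlinarith [hRsq]
    rw [this, Real.sqrt_sq (by positivity)]
  set z : ℂ := ((A:ℝ):ℂ) * b / (((B:ℝ):ℂ) * a) with hzdef
  have hzabs : ‖z‖ = 1 := by
    rw [hzdef, norm_div, norm_mul, norm_mul, Complex.norm_real, Complex.norm_real,
      Real.norm_eq_abs, Real.norm_eq_abs, abs_of_pos hA, abs_of_pos hB]
    change A * B / (B * A) = 1
    rw [div_eq_one_iff_eq (by positivity)]
    ring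
  obtain ⟨θ, hθmem, hθ⟩ := exists_theta z hzabs
  refine ⟨η, θ, ⟨Real.arccos_nonneg x, Real.arccos_le_pi x⟩, hθmem, ?_⟩
  rw [hθ, hsin, hcos, hxdef, hzdef]
  have hBne : ((B:ℝ):ℂ) ≠ 0 := by
    simp only [ne_eq, Complex.ofReal_eq_zero]; exact ne_of_gt hB
  have hRne : ((R:ℝ):ℂ) ≠ 0 := by
    simp only [ne_eq, Complex.ofReal_eq_zero]; exact ne_of_gt hR
  push_cast
  field_simp
  ring

def givensCond {n : ℕ} (L : List (Matrix (Fin n) (Fin n) ℂ)) : Prop :=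
  ∀ A ∈ L, ∃ (i j : Fin n) (η θ : ℝ), i < j ∧ η ∈ Set.Icc 0 Real.pi ∧
    θ ∈ Set.Ico 0 (2 * Real.pi) ∧ A = givensMatrix i j η θ

def colsE {n r : ℕ} (k : ℕ) (W : Matrix (Fin n) (Fin r) ℂ) : Prop :=
  ∀ (a : Fin n) (mm : Fin r), (mm : ℕ) < k → (a : ℕ) ≠ (mm : ℕ) → W a mm = 0

/-- inner induction: clear the sub-diagonal entries of column `k`, from the bottom up. -/
lemma clear_column {n r : ℕ} (hrn : r ≤ n) (k : Fin r) :
    ∀ (t : ℕ), (k : ℕ) + t ≤ n - 1 →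
    ∀ (V : Matrix (Fin n) (Fin r) ℂ), Vᴴ * V = 1 → colsE (k : ℕ) V →
    ∃ (L' : List (Matrix (Fin n) (Fin n) ℂ)) (W : Matrix (Fin n) (Fin r) ℂ),
      L'.length ≤ t ∧ givensCond L' ∧ Wᴴ * W = 1 ∧ V = L'.prod * W ∧
      colsE (k : ℕ) W ∧ (∀ a : Fin n, n - t ≤ (a : ℕ) → W a k = 0) := by
  intro t
  induction t with
  | zero =>
    intro _ V hV hE
    exact ⟨[], V, by simp, by intro A hA; simp at hA, hV, by simp, hE,
      fun a ha => absurd a.isLt (by omega)⟩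
  | succ t ih =>
    intro ht V hV hE
    have hkr : (k : ℕ) < r := k.isLt
    have hkn : (k : ℕ) < n := lt_of_lt_of_le hkr hrn
    obtain ⟨L', W, hlen, hcond, hW, hfact, hEW, hzero⟩ := ih (by omega) V hV hE
    set i : Fin n := ⟨(k : ℕ), hkn⟩ with hidef
    set j : Fin n := ⟨n - 1 - t, by omega⟩ with hjdef
    have hij : i < j := by
      rw [Fin.lt_def]; show (k : ℕ) < n - 1 - t; omega
    have hijne : i ≠ j := Fin.ne_of_lt hij
    obtain ⟨η, θ, hη, hθ, heq⟩ := exists_rotation_param (W i k) (W j k)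
    set G := givensMatrix i j η θ with hGdef
    have hGG : G * Gᴴ = 1 := givens_mul_conjT hijne η θ
    set W' : Matrix (Fin n) (Fin r) ℂ := Gᴴ * W with hW'def
    have hWfact : W = G * W' := by
      rw [hW'def, ← Matrix.mul_assoc, hGG, Matrix.one_mul]
    refine ⟨L' ++ [G], W', ?_, ?_, ?_, ?_, ?_, ?_⟩
    · simp only [List.length_append, List.length_singleton]; omega
    · intro A hA
      rcases List.mem_append.mp hA with h | h
      · exact hcond A h
      · rcases List.mem_singleton.mp h with rfl
        exact ⟨i, j, η, θ, hij, hη, hθ, rfl⟩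
    · rw [hW'def, Matrix.conjTranspose_mul, Matrix.conjTranspose_conjTranspose,
        Matrix.mul_assoc, ← Matrix.mul_assoc G, hGG, Matrix.one_mul, hW]
    · rw [hfact, hWfact, List.prod_append, List.prod_singleton, Matrix.mul_assoc]
    · intro a mm hmk ham
      rw [hW'def, conjT_givens_mul_apply hijne]
      have him : (i : ℕ) ≠ (mm : ℕ) := by simp only [hidef]; omega
      have hjm : (j : ℕ) ≠ (mm : ℕ) := by simp only [hjdef]; omega
      rcases eq_or_ne a i with rfl | hai
      · rw [if_pos rfl, hEW i mm hmk him, hEW j mm hmk hjm]; ring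
      · rcases eq_or_ne a j with rfl | haj
        · rw [if_neg hai, if_pos rfl, hEW i mm hmk him, hEW j mm hmk hjm]; ring
        · rw [if_neg hai, if_neg haj]; exact hEW a mm hmk ham
    · intro a ha
      rw [hW'def, conjT_givens_mul_apply hijne]
      have hai : a ≠ i := by
        intro h; rw [h] at ha; simp only [hidef] at ha; omega
      rcases eq_or_ne a j with rfl | haj
      · rw [if_neg hai, if_pos rfl]; exact heq
      · rw [if_neg hai, if_neg haj]
        apply hzero
        have : (a : ℕ) ≠ n - 1 - t := fun h => haj (Fin.ext h)
        omega

lemma outer_induction {n r : ℕ} (hrn : r ≤ n) (U : Matrix (Fin n) (Fin r) ℂ)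
    (hU : Uᴴ * U = 1) :
    ∀ k, k ≤ r → ∃ (L : List (Matrix (Fin n) (Fin n) ℂ)) (V : Matrix (Fin n) (Fin r) ℂ),
      L.length ≤ ∑ t ∈ Finset.range k, (n - 1 - t) ∧ givensCond L ∧ Vᴴ * V = 1 ∧
      U = L.prod * V ∧ colsE k V := by
  intro k
  induction k with
  | zero =>
    intro _
    exact ⟨[], U, by simp, by intro A hA; simp at hA, hU, by simp,
      fun a mm h _ => absurd h (Nat.not_lt_zero _)⟩
  | succ k ih =>
    intro hk
    obtain ⟨L, V, hlen, hcond, hV, hfact, hE⟩ := ih (by omega)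
    have hkr : k < r := hk
    have hkn : k < n := lt_of_lt_of_le hkr hrn
    set kr : Fin r := ⟨k, hkr⟩ with hkrdef
    obtain ⟨L', W, hlen', hcond', hW, hfact', hEW, hzero⟩ :=
      clear_column hrn kr (n - 1 - k) (by show k + (n - 1 - k) ≤ n - 1; omega) V hV hE
    refine ⟨L ++ L', W, ?_, ?_, hW, ?_, ?_⟩
    · rw [List.length_append, Finset.sum_range_succ]; omega
    · intro A hA
      rcases List.mem_append.mp hA with h | h
      exacts [hcond A h, hcond' A h]
    · rw [hfact, hfact', List.prod_append, Matrix.mul_assoc]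
    · intro a mm hmk ham
      rcases Nat.lt_or_ge (mm : ℕ) k with h | h
      · exact hEW a mm h ham
      · have hmmk : (mm : ℕ) = k := by omega
        have hmm : mm = kr := Fin.ext hmmk
        rcases Nat.lt_or_ge (a : ℕ) k with hak | hak
        · -- use orthogonality of columns
          have har : (a : ℕ) < r := by omega
          set ar : Fin r := ⟨(a : ℕ), har⟩ with hardef
          have h1 : (Wᴴ * W) ar mm = 0 := by
            rw [hW, Matrix.one_apply, if_neg]
            intro hcontra
            have hh : (a : ℕ) = (mm : ℕ) := congrArg Fin.val hcontra
            omega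
          have h2 : (Wᴴ * W) ar ar = 1 := by rw [hW, Matrix.one_apply_eq]
          rw [Matrix.mul_apply] at h1 h2
          simp only [Matrix.conjTranspose_apply, ← starRingEnd_apply] at h1 h2
          have hsing1 : ∑ c, conj' (W c ar) * W c mm = conj' (W a ar) * W a mm := by
            apply Finset.sum_eq_single_of_mem a (Finset.mem_univ a)
            intro c _ hca
            rw [hEW c ar hak (fun h' => hca (Fin.ext h')), map_zero, zero_mul]
          have hsing2 : ∑ c, conj' (W c ar) * W c ar = conj' (W a ar) * W a ar := by
            apply Finset.sum_eq_single_of_mem a (Finset.mem_univ a)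
            intro c _ hca
            rw [hEW c ar hak (fun h' => hca (Fin.ext h')), map_zero, zero_mul]
          rw [hsing1] at h1
          rw [hsing2] at h2
          have hne : conj' (W a ar) ≠ 0 := by
            intro h0
            rw [h0, zero_mul] at h2
            exact zero_ne_one h2
          exact (mul_eq_zero.mp h1).resolve_left hne
        · rw [hmm]
          apply hzero
          show n - (n - 1 - k) ≤ (a : ℕ)
          have h6 : (a : ℕ) ≠ k := by
            intro hcontra
            exact ham (by omega)
          clear * - hkn hak h6
          omega

lemma two_mul_count (n : ℕ) : ∀ r, r ≤ n →
    2 * ∑ t ∈ Finset.range r, (n - 1 - t) = (2 * n - r - 1) * r := by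
  intro r
  induction r with
  | zero => intro _; simp
  | succ r ih =>
    intro h
    rw [Finset.sum_range_succ, Nat.mul_add, ih (by omega)]
    rw [show 2 * n - r - 1 = (2 * n - r - 2) + 1 by omega,
      show 2 * n - (r + 1) - 1 = 2 * n - r - 2 by omega, add_mul, one_mul, Nat.mul_succ]
    generalize (2 * n - r - 2) * r = P
    omega

/-- Givens parameterization of semi-orthogonal matrices: every `U ∈ ℂ^{n×r}` with `UᴴU = I`
can be written as `U = Q·Ī·D`, where `Q` is a product of at most `(2n − r − 1)r/2` complex
Givens rotation matrices `G(i,j,η,θ)` with `i < j`, `η ∈ [0,π]`, `θ ∈ [0,2π)`, `Ī` is the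
rectangular identity, and `D = diag(d₁,…,d_r)` with unimodular `dₖ`. -/
theorem givens_parameterization {n r : ℕ} (hr : 1 ≤ r) (hrn : r ≤ n)
    (U : Matrix (Fin n) (Fin r) ℂ) (hU : Uᴴ * U = 1) :
    ∃ L : List (Matrix (Fin n) (Fin n) ℂ),
      L.length ≤ (2 * n - r - 1) * r / 2 ∧
      (∀ A ∈ L, ∃ (i j : Fin n) (η θ : ℝ), i < j ∧ η ∈ Set.Icc 0 Real.pi ∧
        θ ∈ Set.Ico 0 (2 * Real.pi) ∧ A = givensMatrix i j η θ) ∧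
      ∃ d : Fin r → ℂ, (∀ k, ‖d k‖ = 1) ∧
        U = L.prod * rectId n r * Matrix.diagonal d := by
  obtain ⟨L, V, hlen, hcond, hV, hfact, hE⟩ := outer_induction hrn U hU r le_rfl
  refine ⟨L, ?_, hcond, ?_⟩
  · have h2 := two_mul_count n r hrn
    generalize hP : (2 * n - r - 1) * r = P at *
    omega
  · set d : Fin r → ℂ := fun mm => V ⟨(mm : ℕ), lt_of_lt_of_le mm.isLt hrn⟩ mm with hddef
    have hdiag : ∀ mm : Fin r, conj' (d mm) * d mm = 1 := by
      intro mm
      have h2 : (Vᴴ * V) mm mm = 1 := by rw [hV, Matrix.one_apply_eq]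
      rw [Matrix.mul_apply] at h2
      simp only [Matrix.conjTranspose_apply, ← starRingEnd_apply] at h2
      set an : Fin n := ⟨(mm : ℕ), lt_of_lt_of_le mm.isLt hrn⟩ with handef
      have hsing : ∑ c, conj' (V c mm) * V c mm = conj' (V an mm) * V an mm := by
        apply Finset.sum_eq_single_of_mem an (Finset.mem_univ an)
        intro c _ hca
        rw [hE c mm mm.isLt (fun h' => hca (Fin.ext h')), map_zero, zero_mul]
      rw [hsing] at h2
      exact h2
    refine ⟨d, ?_, ?_⟩
    · intro mm
      have := hdiag mm
      rw [Complex.conj_mul'] at this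
      have habs : ‖d mm‖^2 = 1 := by
        have h3 := congrArg Complex.re this
        rw [← Complex.ofReal_pow, Complex.ofReal_re, Complex.one_re] at h3
        exact h3
      nlinarith [norm_nonneg (d mm), habs]
    · rw [Matrix.mul_assoc, hfact]
      congr 1
      ext a b
      rw [Matrix.mul_diagonal]
      show V a b = rectId n r a b * d b
      unfold rectId
      rw [Matrix.of_apply]
      rcases eq_or_ne ((a : ℕ)) ((b : ℕ)) with h | h
      · rw [if_pos h, one_mul, hddef]
        congr 1
        exact Fin.ext h
      · rw [if_neg h, zero_mul]
        exact hE a b b.isLt h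
end
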